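/- Proposition 1: Let 𝒯 be a finite totally ordered set, T₁, T₂ 𝒯-valued random variables with non-degenerate marginal law of T₁, satisfying: (a) for every increasing h : 𝒯 → ℝ, t ↦ E[h(T₂) | T₁ = t] is increasing; (b) φ : 𝒯 → ℝ and ψ : 𝒯 → ℝ are strictly decreasing. Then Cov(φ(T₁), E[ψ(T₂) | T₁]) > 0. -/

import Mathlib

open MeasureTheory

private lemma integral_comp_eq_sum {Ω α : Type*} [MeasurableSpace Ω] [Fintype α]
    [MeasurableSpace α] [MeasurableSingletonClass α]
    (μ : Measure Ω) [IsProbabilityMeasure μ]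
    (T₁ : Ω → α) (hT₁ : Measurable T₁) (f : α → ℝ) :
    ∫ ω, f (T₁ ω) ∂μ = ∑ t, (μ {ω | T₁ ω = t}).toReal * f t := by
  rw [← integral_map hT₁.aemeasurable (measurable_of_countable f).aestronglyMeasurable,
    integral_fintype .of_finite]
  simp [Measure.real, Measure.map_apply hT₁ (measurableSet_singleton _), Set.preimage]

/-- Proposition 1 (abstract form): with strictly monotone regression dependence
of the equilibrium selections `T₁, T₂` on a finite totally ordered set, strictly
decreasing maps `φ, ψ`, and a non-degenerate law of `T₁`, the covariance of
`φ(T₁)` and `E[ψ(T₂) | T₁]` is strictly positive. -/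
theorem cov_pos_affiliated_equilibrium_selection
    {Ω α : Type*} [MeasurableSpace Ω] [Fintype α] [LinearOrder α]
    [MeasurableSpace α] [MeasurableSingletonClass α]
    (μ : Measure Ω) [IsProbabilityMeasure μ]
    (T₁ T₂ : Ω → α) (hT₁ : Measurable T₁) (hT₂ : Measurable T₂)
    (a b : α) (hab : a ≠ b)
    (hpa : 0 < μ {ω | T₁ ω = a}) (hpb : 0 < μ {ω | T₁ ω = b})
    (hMES : ∀ h : α → ℝ, StrictMono h →
      StrictMono (fun t => (∫ ω in {ω | T₁ ω = t}, h (T₂ ω) ∂μ)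
                            / (μ {ω | T₁ ω = t}).toReal))
    (φ ψ : α → ℝ) (hφ : StrictAnti φ) (hψ : StrictAnti ψ)
    -- `r t = E[ψ(T₂) | T₁ = t]`, so `r ∘ T₁` is (a version of) `E[ψ(T₂) | T₁]`
    (r : α → ℝ)
    (hr : r = fun t => (∫ ω in {ω | T₁ ω = t}, ψ (T₂ ω) ∂μ)
                        / (μ {ω | T₁ ω = t}).toReal) :
    0 < (∫ ω, φ (T₁ ω) * r (T₁ ω) ∂μ)
        - (∫ ω, φ (T₁ ω) ∂μ) * (∫ ω, r (T₁ ω) ∂μ) := by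
  -- `r` is strictly antitone, by hypothesis (a) applied to `-ψ`.
  have hrA : StrictAnti r := by
    have hneg : StrictMono (fun t => (∫ ω in {ω | T₁ ω = t}, (fun x => -ψ x) (T₂ ω) ∂μ)
        / (μ {ω | T₁ ω = t}).toReal) := hMES _ (fun x y hxy => neg_lt_neg (hψ hxy))
    intro x y hxy
    have hx := hneg hxy
    simp only [integral_neg, neg_div, hr] at hx ⊢
    linarith
  set p : α → ℝ := fun t => (μ {ω | T₁ ω = t}).toReal with hp
  have hp0 : ∀ t, 0 ≤ p t := fun t => ENNReal.toReal_nonneg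
  have hpa' : 0 < p a := ENNReal.toReal_pos hpa.ne' (measure_ne_top μ _)
  have hpb' : 0 < p b := ENNReal.toReal_pos hpb.ne' (measure_ne_top μ _)
  have hp1 : ∑ t, p t = 1 := by
    have := integral_comp_eq_sum μ T₁ hT₁ (fun _ => (1 : ℝ))
    simpa using this.symm
  rw [integral_comp_eq_sum μ T₁ hT₁ (fun t => φ t * r t),
    integral_comp_eq_sum μ T₁ hT₁ φ, integral_comp_eq_sum μ T₁ hT₁ r]
  -- nonnegativity of all the "comonotone" cross terms
  have hnn : ∀ s t : α, 0 ≤ p s * p t * ((φ s - φ t) * (r s - r t)) := by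
    intro s t
    apply mul_nonneg (mul_nonneg (hp0 s) (hp0 t))
    rcases lt_trichotomy s t with h | h | h
    · nlinarith [hφ h, hrA h]
    · simp [h]
    · nlinarith [hφ h, hrA h]
  have hposab : 0 < p a * p b * ((φ a - φ b) * (r a - r b)) := by
    apply mul_pos (mul_pos hpa' hpb')
    rcases hab.lt_or_gt with h | h
    · exact mul_pos (by linarith [hφ h]) (by linarith [hrA h])
    · exact mul_pos_of_neg_of_neg (by linarith [hφ h]) (by linarith [hrA h])
  have hS : 0 < ∑ s, ∑ t, p s * p t * ((φ s - φ t) * (r s - r t)) := by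
    apply Finset.sum_pos' (fun s _ => Finset.sum_nonneg fun t _ => hnn s t)
    exact ⟨a, Finset.mem_univ a,
      Finset.sum_pos' (fun t _ => hnn a t) ⟨b, Finset.mem_univ b, hposab⟩⟩
  have hkey : ∑ s, ∑ t, p s * p t * ((φ s - φ t) * (r s - r t))
      = 2 * ((∑ t, p t * (φ t * r t)) - (∑ t, p t * φ t) * (∑ t, p t * r t)) := by
    have expand : ∀ s : α, ∑ t, p s * p t * ((φ s - φ t) * (r s - r t))
        = p s * (φ s * r s) * (∑ t, p t) - p s * φ s * (∑ t, p t * r t)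
          - p s * r s * (∑ t, p t * φ t) + p s * (∑ t, p t * (φ t * r t)) := by
      intro s
      simp only [Finset.mul_sum, ← Finset.sum_sub_distrib, ← Finset.sum_add_distrib]
      exact Finset.sum_congr rfl fun t _ => by ring
    rw [Finset.sum_congr rfl fun s _ => expand s]
    simp only [Finset.sum_add_distrib, Finset.sum_sub_distrib, ← Finset.sum_mul,
      ← Finset.mul_sum]
    rw [hp1]
    ring
  rw [hkey] at hS
  linarith
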